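/- In the abstract setting of a closed Hilbert complex (V⁻, d⁻) → (V, d) → W with Poincaré inequality constants c_P on orthogonal complements of kernels and trivial harmonic space, the mixed variational problem — find (σ, ξ, u) ∈ V⁻ × W × V with ⟨σ, τ⟩ + ⟨d⁻τ, u⟩ = 0, ⟨ξ, η⟩ + ⟨du, η⟩ = 0, ⟨d⁻σ, v⟩ + ⟨ξ, dv⟩ = −⟨f, v⟩ for all test functions — satisfies a continuous inf-sup condition: there exists C_cts > 0 depending only on c_P such that for all unit-norm (σ, ξ, u) there are unit-norm (τ, η, v) with B(σ, ξ, u; τ, η, v) ≥ C_cts, where B is the sum of all the bilinear forms and norms are ‖σ‖²_{V⁻} + ‖ξ‖² + ‖u‖²_V with graph norms on V⁻ and V. -/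

import Mathlib

open RealInnerProductSpace

private lemma key (c a b x xd p q g U : ℝ) (hc : 1 ≤ c)
    (hq : 0 ≤ q)
    (hg : 0 ≤ g) (hqg : q ≤ c * g) (hU2 : U ^ 2 = p ^ 2 + q ^ 2)
    (hsum : a ^ 2 + b ^ 2 + x ^ 2 + p ^ 2 + q ^ 2 + g ^ 2 = 1) :
    1 ≤ 16*c^4*a^2 + 16*c^4*x^2 + 5184*c^10*b^2 + 8*c^2*g^2 + 8*c^2*p^2 + 144*c^6*xd^2
      - 8*c^3*(a*p) - (8*c^2+32*c^4)*(xd*g) - 32*c^4*(b*U) - 144*c^7*(b*xd) := by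
  have hc2 : 1 ≤ c^2 := by nlinarith
  have hc4 : 1 ≤ c^4 := by nlinarith [sq_nonneg (c^2 - 1)]
  have hc24 : c^2 ≤ c^4 := by nlinarith [mul_le_mul_of_nonneg_left hc2 (by positivity : (0:ℝ) ≤ c^2)]
  have hc6 : c^4 ≤ c^6 := by nlinarith [mul_le_mul_of_nonneg_left hc2 (by positivity : (0:ℝ) ≤ c^4)]
  have hc8 : c^6 ≤ c^8 := by nlinarith [mul_le_mul_of_nonneg_left hc2 (by positivity : (0:ℝ) ≤ c^6)]
  have hc10 : c^8 ≤ c^10 := by nlinarith [mul_le_mul_of_nonneg_left hc2 (by positivity : (0:ℝ) ≤ c^8)]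
  have h5 : q^2 ≤ c^2 * g^2 := by nlinarith
  have f1 : 0 ≤ (12*c^4 - 1) * a^2 := mul_nonneg (by linarith) (sq_nonneg a)
  have f2 : 0 ≤ (3888*c^10 - 256*c^8 - 1) * b^2 :=
    mul_nonneg (by linarith) (sq_nonneg b)
  have f3 : 0 ≤ (16*c^4 - 1) * x^2 := mul_nonneg (by linarith) (sq_nonneg x)
  have f4 : 0 ≤ (4*c^2 - 2) * p^2 := mul_nonneg (by linarith) (sq_nonneg p)
  have f5 : 0 ≤ (2*c^2 - 1) * g^2 := mul_nonneg (by linarith) (sq_nonneg g)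
  have f6 : 0 ≤ (80*c^6 - 36*c^4 - 4*c^2) * xd^2 :=
    mul_nonneg (by linarith) (sq_nonneg xd)
  have e1 : (0:ℝ) ≤ (2*c^2*a - 2*c*p)^2 := sq_nonneg _
  have e2 : (0:ℝ) ≤ (2*c*g - (2*c+8*c^3)*xd)^2 := sq_nonneg _
  have e3 : (0:ℝ) ≤ (16*c^4*b - U)^2 := sq_nonneg _
  have e4 : (0:ℝ) ≤ (36*c^5*b - 2*c^2*xd)^2 := sq_nonneg _
  linarith [e1, e2, e3, e4, h5, f1, f2, f3, f4, f5, f6]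

private lemma le_of_sq (a b : ℝ) (ha : 0 ≤ a) (hb : 0 ≤ b) (h : a^2 ≤ b^2) : a ≤ b := by
  nlinarith

private lemma pyth {E : Type*} [NormedAddCommGroup E] [InnerProductSpace ℝ E]
    {K : Submodule ℝ E} {m n : E} (hm : m ∈ K) (hn : n ∈ Kᗮ) :
    ‖m + n‖ ^ 2 = ‖m‖ ^ 2 + ‖n‖ ^ 2 := by
  have h : ⟪m, n⟫ = 0 := Submodule.inner_right_of_mem_orthogonal hm hn
  rw [norm_add_sq_real, h]; ring

private lemma liftit {A B : Type*} [NormedAddCommGroup A] [InnerProductSpace ℝ A]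
    [CompleteSpace A] [NormedAddCommGroup B] [InnerProductSpace ℝ B]
    (f : A →L[ℝ] B) (cP : ℝ)
    (hP : ∀ x ∈ (LinearMap.ker (f : A →ₗ[ℝ] B))ᗮ, ‖x‖ ≤ cP * ‖f x‖)
    (y : B) (hy : y ∈ Set.range f) :
    ∃ x : A, f x = y ∧ ‖x‖ ≤ cP * ‖y‖ := by
  obtain ⟨x0, hx0⟩ := hy
  have hclosed : IsClosed ((LinearMap.ker (f : A →ₗ[ℝ] B) : Submodule ℝ A) : Set A) := by
    have h : ((LinearMap.ker (f : A →ₗ[ℝ] B) : Submodule ℝ A) : Set A) = f ⁻¹' {0} := by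
      ext v; simp [LinearMap.mem_ker]
    rw [h]; exact isClosed_singleton.preimage f.continuous
  haveI : CompleteSpace (LinearMap.ker (f : A →ₗ[ℝ] B)) := hclosed.completeSpace_coe
  set x := x0 - (Submodule.orthogonalProjection (LinearMap.ker (f : A →ₗ[ℝ] B)) x0 : A) with hxdef
  have hmem := Submodule.coe_mem (Submodule.orthogonalProjection (LinearMap.ker (f : A →ₗ[ℝ] B)) x0)
  have h0 : f (Submodule.orthogonalProjection (LinearMap.ker (f : A →ₗ[ℝ] B)) x0 : A) = 0 := LinearMap.mem_ker.mp hmem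
  have hfx : f x = y := by rw [hxdef]; rw [map_sub, h0, hx0]; abel
  have hxo : x ∈ (LinearMap.ker (f : A →ₗ[ℝ] B))ᗮ := Submodule.sub_starProjection_mem_orthogonal (K := LinearMap.ker (f : A →ₗ[ℝ] B)) x0
  refine ⟨x, hfx, ?_⟩
  have := hP x hxo
  rwa [hfx] at this

set_option maxHeartbeats 8000000 in
/-- continuous inf-sup condition for the mixed formulation of the Hodge Laplacian
on a closed Hilbert complex `(V⁻, d⁻) → (V, d) → W` with Poincaré inequalities and trivial
harmonic space; norms on `V⁻` and `V` are graph norms. -/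
theorem stmt7
    {Vm V W : Type*} [NormedAddCommGroup Vm] [InnerProductSpace ℝ Vm] [CompleteSpace Vm]
    [NormedAddCommGroup V] [InnerProductSpace ℝ V] [CompleteSpace V]
    [NormedAddCommGroup W] [InnerProductSpace ℝ W] [CompleteSpace W]
    (dm : Vm →L[ℝ] V) (d : V →L[ℝ] W)
    (hcomplex : ∀ τ : Vm, d (dm τ) = 0)
    (hrange_dm : IsClosed (Set.range dm)) (hrange_d : IsClosed (Set.range d))
    (cP : ℝ) (hcP : 0 < cP)
    (hPoincare : ∀ v ∈ (LinearMap.ker (d : V →ₗ[ℝ] W))ᗮ, ‖v‖ ≤ cP * ‖d v‖)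
    (hPoincare' : ∀ τ ∈ (LinearMap.ker (dm : Vm →ₗ[ℝ] V))ᗮ, ‖τ‖ ≤ cP * ‖dm τ‖)
    (hharmonic : ∀ v : V, d v = 0 → v ∈ Set.range dm) :
    ∃ Ccts : ℝ, 0 < Ccts ∧ ∀ (σ : Vm) (ξ : W) (u : V),
      ‖σ‖ ^ 2 + ‖dm σ‖ ^ 2 + ‖ξ‖ ^ 2 + ‖u‖ ^ 2 + ‖d u‖ ^ 2 = 1 →
      ∃ (τ : Vm) (η : W) (v : V),
        ‖τ‖ ^ 2 + ‖dm τ‖ ^ 2 + ‖η‖ ^ 2 + ‖v‖ ^ 2 + ‖d v‖ ^ 2 = 1 ∧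
        ⟪σ, τ⟫ + ⟪ξ, η⟫ + ⟪dm σ, v⟫ + ⟪ξ, d v⟫ + ⟪dm τ, u⟫ + ⟪η, d u⟫ ≥ Ccts := by
  set c : ℝ := cP + 1 with hcdef
  have hc1 : (1:ℝ) ≤ c := by rw [hcdef]; linarith
  have hcpos : (0:ℝ) < c := by linarith
  have hcne : c ≠ 0 := ne_of_gt hcpos
  have hcPle : cP ≤ c := by rw [hcdef]; linarith
  clear_value c
  refine ⟨(5600 * c ^ 10)⁻¹, by positivity, ?_⟩
  intro σ ξ u hnorm
  -- closed submodules
  have hker_d_closed : IsClosed ((LinearMap.ker (d : V →ₗ[ℝ] W) : Submodule ℝ V) : Set V) := by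
    have h : ((LinearMap.ker (d : V →ₗ[ℝ] W) : Submodule ℝ V) : Set V) = d ⁻¹' {0} := by
      ext v; simp [LinearMap.mem_ker]
    rw [h]; exact isClosed_singleton.preimage d.continuous
  haveI : CompleteSpace (LinearMap.ker (d : V →ₗ[ℝ] W)) := hker_d_closed.completeSpace_coe
  have hrange_closed : IsClosed ((LinearMap.range (d : V →ₗ[ℝ] W) : Submodule ℝ W) : Set W) := by
    have h : ((LinearMap.range (d : V →ₗ[ℝ] W) : Submodule ℝ W) : Set W) = Set.range d := by
      ext w; simp [LinearMap.mem_range]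
    rw [h]; exact hrange_d
  haveI : CompleteSpace (LinearMap.range (d : V →ₗ[ℝ] W)) := hrange_closed.completeSpace_coe
  -- decomposition of u
  set uB : V := (Submodule.orthogonalProjection (LinearMap.ker (d : V →ₗ[ℝ] W)) u : V) with huBdef
  set uP : V := u - uB with huPdef
  have huB_mem : uB ∈ LinearMap.ker (d : V →ₗ[ℝ] W) := Submodule.coe_mem _
  have hd_uB : d uB = 0 := LinearMap.mem_ker.mp huB_mem
  have huP_mem : uP ∈ (LinearMap.ker (d : V →ₗ[ℝ] W))ᗮ := Submodule.sub_starProjection_mem_orthogonal (K := LinearMap.ker (d : V →ₗ[ℝ] W)) u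
  have hduP : d uP = d u := by rw [huPdef, map_sub, hd_uB]; abel
  have huP_bound : ‖uP‖ ≤ cP * ‖d u‖ := by
    have := hPoincare uP huP_mem; rwa [hduP] at this
  have hu_split : u = uB + uP := by rw [huPdef]; abel
  have hPyth_u : ‖u‖ ^ 2 = ‖uB‖ ^ 2 + ‖uP‖ ^ 2 := by
    conv_lhs => rw [hu_split]
    exact pyth huB_mem huP_mem
  have huBu : ⟪uB, u⟫ = ‖uB‖ ^ 2 := by
    have h0 : ⟪uB, uP⟫ = 0 := Submodule.inner_right_of_mem_orthogonal huB_mem huP_mem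
    conv_lhs => rw [hu_split]
    rw [inner_add_right, h0, real_inner_self_eq_norm_sq]; ring
  -- ρ with dm ρ = uB
  obtain ⟨ρ, hρ1, hρ2⟩ := liftit dm cP hPoincare' uB (hharmonic uB hd_uB)
  -- decomposition of ξ
  set ξd : W := (Submodule.orthogonalProjection (LinearMap.range (d : V →ₗ[ℝ] W)) ξ : W) with hξddef
  set ξp : W := ξ - ξd with hξpdef
  have hξd_mem : ξd ∈ LinearMap.range (d : V →ₗ[ℝ] W) := Submodule.coe_mem _
  have hξp_mem : ξp ∈ (LinearMap.range (d : V →ₗ[ℝ] W))ᗮ := Submodule.sub_starProjection_mem_orthogonal (K := LinearMap.range (d : V →ₗ[ℝ] W)) ξ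
  have hξ_split : ξ = ξd + ξp := by rw [hξpdef]; abel
  have hPyth_ξ : ‖ξ‖ ^ 2 = ‖ξd‖ ^ 2 + ‖ξp‖ ^ 2 := by
    conv_lhs => rw [hξ_split]
    exact pyth hξd_mem hξp_mem
  have hξξd : ⟪ξ, ξd⟫ = ‖ξd‖ ^ 2 := by
    have h0 : ⟪ξd, ξp⟫ = 0 := Submodule.inner_right_of_mem_orthogonal hξd_mem hξp_mem
    have h0' : ⟪ξp, ξd⟫ = 0 := by rw [real_inner_comm]; exact h0
    conv_lhs => rw [hξ_split]
    rw [inner_add_left, real_inner_self_eq_norm_sq, h0']; ring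
  have hξdu : ⟪ξ, d u⟫ = ⟪ξd, d u⟫ := by
    have h0 : ⟪d u, ξp⟫ = 0 :=
      Submodule.inner_right_of_mem_orthogonal (LinearMap.mem_range.mpr ⟨u, rfl⟩) hξp_mem
    have h0' : ⟪ξp, d u⟫ = 0 := by rw [real_inner_comm]; exact h0
    conv_lhs => rw [hξ_split]
    rw [inner_add_left, h0']; ring
  have hξd_le : ‖ξd‖ ≤ ‖ξ‖ :=
    le_of_sq _ _ (norm_nonneg _) (norm_nonneg _) (by linarith [hPyth_ξ, sq_nonneg ‖ξp‖])
  -- w with d w = ξd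
  obtain ⟨w, hw1, hw2⟩ := liftit d cP hPoincare ξd (by
    obtain ⟨z, hz⟩ := LinearMap.mem_range.mp hξd_mem
    exact ⟨z, hz⟩)
  clear_value uB uP ξd ξp
  -- test functions (scaled by 2c^2 to avoid divisions)
  set τ : Vm := (2*c^2) • σ + ρ with hτdef
  set η : W := (2*c^2) • ξ + d u with hηdef
  set v : V := (2*c^2) • u + (648*c^8) • (dm σ) + (18*c^4) • w with hvdef
  have hdmτ : dm τ = (2*c^2) • (dm σ) + uB := by rw [hτdef, map_add, map_smul, hρ1]
  have hdv : d v = (2*c^2) • (d u) + (18*c^4) • ξd := by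
    rw [hvdef, map_add, map_add, map_smul, map_smul, map_smul, hcomplex σ, hw1, smul_zero]
    abel
  clear_value τ η v
  -- the big identity
  have hS : ⟪σ, τ⟫ + ⟪ξ, η⟫ + ⟪dm σ, v⟫ + ⟪ξ, d v⟫ + ⟪dm τ, u⟫ + ⟪η, d u⟫
      = 2*c^2*‖σ‖^2 + 2*c^2*‖ξ‖^2 + 648*c^8*‖dm σ‖^2 + ‖d u‖^2 + ‖uB‖^2 + 18*c^4*‖ξd‖^2
        + ⟪σ,ρ⟫ + (4*c^2+1)*⟪ξd, d u⟫ + (4*c^2)*⟪dm σ, u⟫ + (18*c^4)*⟪dm σ, w⟫ := by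
    rw [hdmτ, hdv, hτdef, hηdef, hvdef]
    simp only [inner_add_left, inner_add_right, real_inner_smul_left, real_inner_smul_right,
      real_inner_self_eq_norm_sq]
    rw [hξξd, hξdu, huBu]
    ring
  -- Cauchy-Schwarz lower bounds
  have hρc : ‖ρ‖ ≤ c * ‖uB‖ := by
    calc ‖ρ‖ ≤ cP * ‖uB‖ := hρ2
    _ ≤ c * ‖uB‖ := mul_le_mul_of_nonneg_right hcPle (norm_nonneg _)
  have hwc : ‖w‖ ≤ c * ‖ξd‖ := by
    calc ‖w‖ ≤ cP * ‖ξd‖ := hw2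
    _ ≤ c * ‖ξd‖ := mul_le_mul_of_nonneg_right hcPle (norm_nonneg _)
  have cs1 : -(‖σ‖*(c*‖uB‖)) ≤ ⟪σ,ρ⟫ := by
    have h1 := abs_real_inner_le_norm σ ρ
    have h2 : ‖σ‖*‖ρ‖ ≤ ‖σ‖*(c*‖uB‖) := mul_le_mul_of_nonneg_left hρc (norm_nonneg σ)
    linarith [neg_abs_le ⟪σ,ρ⟫]
  have cs2 : -(‖ξd‖*‖d u‖) ≤ ⟪ξd, d u⟫ := by
    have h1 := abs_real_inner_le_norm ξd (d u)
    linarith [neg_abs_le ⟪ξd, d u⟫]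
  have cs3 : -(‖dm σ‖*‖u‖) ≤ ⟪dm σ, u⟫ := by
    have h1 := abs_real_inner_le_norm (dm σ) u
    linarith [neg_abs_le ⟪dm σ, u⟫]
  have cs4 : -(‖dm σ‖*(c*‖ξd‖)) ≤ ⟪dm σ, w⟫ := by
    have h1 := abs_real_inner_le_norm (dm σ) w
    have h2 : ‖dm σ‖*‖w‖ ≤ ‖dm σ‖*(c*‖ξd‖) := mul_le_mul_of_nonneg_left hwc (norm_nonneg _)
    linarith [neg_abs_le ⟪dm σ, w⟫]
  -- apply key lemma
  have hsum' : ‖σ‖^2 + ‖dm σ‖^2 + ‖ξ‖^2 + ‖uB‖^2 + ‖uP‖^2 + ‖d u‖^2 = 1 := by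
    linarith [hnorm, hPyth_u]
  have hqg : ‖uP‖ ≤ c * ‖d u‖ := by
    calc ‖uP‖ ≤ cP * ‖d u‖ := huP_bound
    _ ≤ c * ‖d u‖ := mul_le_mul_of_nonneg_right hcPle (norm_nonneg _)
  have hkey := key c ‖σ‖ ‖dm σ‖ ‖ξ‖ ‖ξd‖ ‖uB‖ ‖uP‖ ‖d u‖ ‖u‖ hc1
    (norm_nonneg _) (norm_nonneg _) hqg hPyth_u hsum'
  -- lower bound for S
  have hpos8 : (0:ℝ) < 8*c^2 := by positivity
  have hSlb : (8*c^2)⁻¹ ≤ ⟪σ, τ⟫ + ⟪ξ, η⟫ + ⟪dm σ, v⟫ + ⟪ξ, d v⟫ + ⟪dm τ, u⟫ + ⟪η, d u⟫ := by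
    have hE : 8*c^2*(2*c^2*‖σ‖^2 + 2*c^2*‖ξ‖^2 + 648*c^8*‖dm σ‖^2 + ‖d u‖^2 + ‖uB‖^2
          + 18*c^4*‖ξd‖^2 - ‖σ‖*(c*‖uB‖) - (4*c^2+1)*(‖ξd‖*‖d u‖) - (4*c^2)*(‖dm σ‖*‖u‖)
          - (18*c^4)*(‖dm σ‖*(c*‖ξd‖)))
        = 16*c^4*‖σ‖^2 + 16*c^4*‖ξ‖^2 + 5184*c^10*‖dm σ‖^2 + 8*c^2*‖d u‖^2 + 8*c^2*‖uB‖^2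
          + 144*c^6*‖ξd‖^2 - 8*c^3*(‖σ‖*‖uB‖) - (8*c^2+32*c^4)*(‖ξd‖*‖d u‖)
          - 32*c^4*(‖dm σ‖*‖u‖) - 144*c^7*(‖dm σ‖*‖ξd‖) := by ring
    have h1 : 1 ≤ 8*c^2*(2*c^2*‖σ‖^2 + 2*c^2*‖ξ‖^2 + 648*c^8*‖dm σ‖^2 + ‖d u‖^2 + ‖uB‖^2
          + 18*c^4*‖ξd‖^2 - ‖σ‖*(c*‖uB‖) - (4*c^2+1)*(‖ξd‖*‖d u‖) - (4*c^2)*(‖dm σ‖*‖u‖)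
          - (18*c^4)*(‖dm σ‖*(c*‖ξd‖))) := by
      rw [hE]; exact hkey
    have h2 : (8*c^2)⁻¹ ≤ 2*c^2*‖σ‖^2 + 2*c^2*‖ξ‖^2 + 648*c^8*‖dm σ‖^2 + ‖d u‖^2 + ‖uB‖^2
          + 18*c^4*‖ξd‖^2 - ‖σ‖*(c*‖uB‖) - (4*c^2+1)*(‖ξd‖*‖d u‖) - (4*c^2)*(‖dm σ‖*‖u‖)
          - (18*c^4)*(‖dm σ‖*(c*‖ξd‖)) := by
      have h3 := mul_le_mul_of_nonneg_left h1 (le_of_lt (inv_pos.mpr hpos8))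
      rwa [mul_one, inv_mul_cancel_left₀ (ne_of_gt hpos8)] at h3
    have hq1 : (0:ℝ) ≤ 4*c^2+1 := by positivity
    have hq2 : (0:ℝ) ≤ 4*c^2 := by positivity
    have hq3 : (0:ℝ) ≤ 18*c^4 := by positivity
    have m2 : -((4*c^2+1)*(‖ξd‖*‖d u‖)) ≤ (4*c^2+1)*⟪ξd, d u⟫ := by
      have := mul_le_mul_of_nonneg_left cs2 hq1; linarith
    have m3 : -((4*c^2)*(‖dm σ‖*‖u‖)) ≤ (4*c^2)*⟪dm σ, u⟫ := by
      have := mul_le_mul_of_nonneg_left cs3 hq2; linarith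
    have m4 : -((18*c^4)*(‖dm σ‖*(c*‖ξd‖))) ≤ (18*c^4)*⟪dm σ, w⟫ := by
      have := mul_le_mul_of_nonneg_left cs4 hq3; linarith
    rw [hS]
    linarith [h2, cs1, m2, m3, m4]
  -- norm bounds for the test triple
  have hσ1 : ‖σ‖ ≤ 1 := le_of_sq _ 1 (norm_nonneg _) zero_le_one (by
    linarith [hnorm, sq_nonneg ‖dm σ‖, sq_nonneg ‖ξ‖, sq_nonneg ‖u‖, sq_nonneg ‖d u‖])
  have hb1 : ‖dm σ‖ ≤ 1 := le_of_sq _ 1 (norm_nonneg _) zero_le_one (by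
    linarith [hnorm, sq_nonneg ‖σ‖, sq_nonneg ‖ξ‖, sq_nonneg ‖u‖, sq_nonneg ‖d u‖])
  have hx1 : ‖ξ‖ ≤ 1 := le_of_sq _ 1 (norm_nonneg _) zero_le_one (by
    linarith [hnorm, sq_nonneg ‖σ‖, sq_nonneg ‖dm σ‖, sq_nonneg ‖u‖, sq_nonneg ‖d u‖])
  have hU1 : ‖u‖ ≤ 1 := le_of_sq _ 1 (norm_nonneg _) zero_le_one (by
    linarith [hnorm, sq_nonneg ‖σ‖, sq_nonneg ‖dm σ‖, sq_nonneg ‖ξ‖, sq_nonneg ‖d u‖])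
  have hg1 : ‖d u‖ ≤ 1 := le_of_sq _ 1 (norm_nonneg _) zero_le_one (by
    linarith [hnorm, sq_nonneg ‖σ‖, sq_nonneg ‖dm σ‖, sq_nonneg ‖ξ‖, sq_nonneg ‖u‖])
  have hp1 : ‖uB‖ ≤ 1 := le_of_sq _ 1 (norm_nonneg _) zero_le_one (by
    linarith [hnorm, sq_nonneg ‖σ‖, sq_nonneg ‖dm σ‖, sq_nonneg ‖ξ‖, sq_nonneg ‖d u‖,
      sq_nonneg ‖uP‖, hPyth_u])
  have hxd1 : ‖ξd‖ ≤ 1 := le_trans hξd_le hx1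
  have hc2ge1 : (1:ℝ) ≤ c^2 := by simpa using pow_le_pow_right₀ hc1 (Nat.zero_le 2)
  have hρ1' : ‖ρ‖ ≤ c := by
    calc ‖ρ‖ ≤ c * ‖uB‖ := hρc
    _ ≤ c * 1 := mul_le_mul_of_nonneg_left hp1 (le_of_lt hcpos)
    _ = c := mul_one c
  have hw1' : ‖w‖ ≤ c := by
    calc ‖w‖ ≤ c * ‖ξd‖ := hwc
    _ ≤ c * 1 := mul_le_mul_of_nonneg_left hxd1 (le_of_lt hcpos)
    _ = c := mul_one c
  have hτn : ‖τ‖ ≤ 3*c^2 := by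
    have h0 : ‖τ‖ ≤ 2*c^2*‖σ‖ + ‖ρ‖ := by
      rw [hτdef]
      refine le_trans (norm_add_le _ _) ?_
      rw [norm_smul, Real.norm_eq_abs, abs_of_nonneg (by positivity : (0:ℝ) ≤ 2*c^2)]
    have h1 : 2*c^2*‖σ‖ ≤ 2*c^2*1 := mul_le_mul_of_nonneg_left hσ1 (by positivity)
    have h2 : c ≤ c^2 := by
      simpa using pow_le_pow_right₀ hc1 (by norm_num : 1 ≤ 2)
    linarith
  have hdmτn : ‖dm τ‖ ≤ 3*c^2 := by
    have h0 : ‖dm τ‖ ≤ 2*c^2*‖dm σ‖ + ‖uB‖ := by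
      rw [hdmτ]
      refine le_trans (norm_add_le _ _) ?_
      rw [norm_smul, Real.norm_eq_abs, abs_of_nonneg (by positivity : (0:ℝ) ≤ 2*c^2)]
    have h1 : 2*c^2*‖dm σ‖ ≤ 2*c^2*1 := mul_le_mul_of_nonneg_left hb1 (by positivity)
    linarith
  have hηn : ‖η‖ ≤ 3*c^2 := by
    have h0 : ‖η‖ ≤ 2*c^2*‖ξ‖ + ‖d u‖ := by
      rw [hηdef]
      refine le_trans (norm_add_le _ _) ?_
      rw [norm_smul, Real.norm_eq_abs, abs_of_nonneg (by positivity : (0:ℝ) ≤ 2*c^2)]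
    have h1 : 2*c^2*‖ξ‖ ≤ 2*c^2*1 := mul_le_mul_of_nonneg_left hx1 (by positivity)
    linarith
  have hc8ge1 : (1:ℝ) ≤ c^8 := by simpa using pow_le_pow_right₀ hc1 (Nat.zero_le 8)
  have hc28 : c^2 ≤ c^8 := pow_le_pow_right₀ hc1 (by norm_num)
  have hc48 : c^4 ≤ c^8 := pow_le_pow_right₀ hc1 (by norm_num)
  have hc58 : c^5 ≤ c^8 := pow_le_pow_right₀ hc1 (by norm_num)
  have hvn : ‖v‖ ≤ 668*c^8 := by
    have h0 : ‖v‖ ≤ 2*c^2*‖u‖ + 648*c^8*‖dm σ‖ + 18*c^4*‖w‖ := by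
      rw [hvdef]
      calc ‖(2*c^2) • u + (648*c^8) • dm σ + (18*c^4) • w‖
          ≤ ‖(2*c^2) • u + (648*c^8) • dm σ‖ + ‖(18*c^4) • w‖ := norm_add_le _ _
      _ ≤ ‖(2*c^2) • u‖ + ‖(648*c^8) • dm σ‖ + ‖(18*c^4) • w‖ := by
          linarith [norm_add_le ((2*c^2) • u) ((648*c^8) • dm σ)]
      _ = 2*c^2*‖u‖ + 648*c^8*‖dm σ‖ + 18*c^4*‖w‖ := by
          rw [norm_smul, norm_smul, norm_smul, Real.norm_eq_abs, Real.norm_eq_abs,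
            Real.norm_eq_abs, abs_of_nonneg (by positivity : (0:ℝ) ≤ 2*c^2),
            abs_of_nonneg (by positivity : (0:ℝ) ≤ 648*c^8),
            abs_of_nonneg (by positivity : (0:ℝ) ≤ 18*c^4)]
    have h1 : 2*c^2*‖u‖ ≤ 2*c^2*1 := mul_le_mul_of_nonneg_left hU1 (by positivity)
    have h2 : 648*c^8*‖dm σ‖ ≤ 648*c^8*1 := mul_le_mul_of_nonneg_left hb1 (by positivity)
    have h3 : 18*c^4*‖w‖ ≤ 18*c^4*c := mul_le_mul_of_nonneg_left hw1' (by positivity)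
    have h4 : 18*c^4*c = 18*c^5 := by ring
    linarith
  have hdvn : ‖d v‖ ≤ 20*c^4 := by
    have h0 : ‖d v‖ ≤ 2*c^2*‖d u‖ + 18*c^4*‖ξd‖ := by
      rw [hdv]
      refine le_trans (norm_add_le _ _) ?_
      rw [norm_smul, norm_smul, Real.norm_eq_abs, Real.norm_eq_abs,
        abs_of_nonneg (by positivity : (0:ℝ) ≤ 2*c^2),
        abs_of_nonneg (by positivity : (0:ℝ) ≤ 18*c^4)]
    have h1 : 2*c^2*‖d u‖ ≤ 2*c^2*1 := mul_le_mul_of_nonneg_left hg1 (by positivity)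
    have h2 : 18*c^4*‖ξd‖ ≤ 18*c^4*1 := mul_le_mul_of_nonneg_left hxd1 (by positivity)
    have h3 : c^2 ≤ c^4 := pow_le_pow_right₀ hc1 (by norm_num)
    linarith
  -- total norm of test triple
  set Nsq : ℝ := ‖τ‖^2 + ‖dm τ‖^2 + ‖η‖^2 + ‖v‖^2 + ‖d v‖^2 with hNsqdef
  clear_value Nsq
  have hNsq_nonneg : 0 ≤ Nsq := by rw [hNsqdef]; positivity
  have hNsq_le : Nsq ≤ (700*c^8)^2 := by
    have b1 : ‖τ‖^2 ≤ (3*c^2)^2 := pow_le_pow_left₀ (norm_nonneg _) hτn 2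
    have b2 : ‖dm τ‖^2 ≤ (3*c^2)^2 := pow_le_pow_left₀ (norm_nonneg _) hdmτn 2
    have b3 : ‖η‖^2 ≤ (3*c^2)^2 := pow_le_pow_left₀ (norm_nonneg _) hηn 2
    have b4 : ‖v‖^2 ≤ (668*c^8)^2 := pow_le_pow_left₀ (norm_nonneg _) hvn 2
    have b5 : ‖d v‖^2 ≤ (20*c^4)^2 := pow_le_pow_left₀ (norm_nonneg _) hdvn 2
    have hc416 : (c^4)^2 ≤ (c^8)^2 := pow_le_pow_left₀ (by positivity) hc48 2
    have hc216 : (c^2)^2 ≤ (c^8)^2 := pow_le_pow_left₀ (by positivity) hc28 2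
    rw [hNsqdef]
    linarith [b1, b2, b3, b4, b5, hc416, hc216]
  have hNsq_pos : 0 < Nsq := by
    rcases hNsq_nonneg.lt_or_eq with h | h
    · exact h
    · exfalso
      have hτ0 : τ = 0 := by
        have h1 : ‖τ‖^2 ≤ 0 := by
          rw [hNsqdef] at h
          linarith [sq_nonneg ‖dm τ‖, sq_nonneg ‖η‖, sq_nonneg ‖v‖, sq_nonneg ‖d v‖]
        have h3 : ‖τ‖^2 = 0 := le_antisymm h1 (sq_nonneg _)
        have h2 : ‖τ‖ = 0 := pow_eq_zero_iff (by norm_num) |>.mp h3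
        exact norm_eq_zero.mp h2
      have hη0 : η = 0 := by
        have h1 : ‖η‖^2 ≤ 0 := by
          rw [hNsqdef] at h
          linarith [sq_nonneg ‖dm τ‖, sq_nonneg ‖τ‖, sq_nonneg ‖v‖, sq_nonneg ‖d v‖]
        have h3 : ‖η‖^2 = 0 := le_antisymm h1 (sq_nonneg _)
        have h2 : ‖η‖ = 0 := pow_eq_zero_iff (by norm_num) |>.mp h3
        exact norm_eq_zero.mp h2
      have hv0 : v = 0 := by
        have h1 : ‖v‖^2 ≤ 0 := by
          rw [hNsqdef] at h
          linarith [sq_nonneg ‖dm τ‖, sq_nonneg ‖τ‖, sq_nonneg ‖η‖, sq_nonneg ‖d v‖]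
        have h3 : ‖v‖^2 = 0 := le_antisymm h1 (sq_nonneg _)
        have h2 : ‖v‖ = 0 := pow_eq_zero_iff (by norm_num) |>.mp h3
        exact norm_eq_zero.mp h2
      have hcontr := hSlb
      rw [hτ0, hη0, hv0] at hcontr
      simp only [map_zero, inner_zero_left, inner_zero_right, add_zero, zero_add] at hcontr
      have : (0:ℝ) < (8*c^2)⁻¹ := by positivity
      linarith
  set N : ℝ := Real.sqrt Nsq with hNdef
  clear_value N
  have hNpos : 0 < N := by rw [hNdef]; exact Real.sqrt_pos.mpr hNsq_pos
  have hN2 : N^2 = Nsq := by rw [hNdef]; exact Real.sq_sqrt hNsq_nonneg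
  have hNle : N ≤ 700*c^8 := by
    rw [hNdef]
    calc Real.sqrt Nsq ≤ Real.sqrt ((700*c^8)^2) := Real.sqrt_le_sqrt hNsq_le
    _ = 700*c^8 := Real.sqrt_sq (by positivity)
  have hNinv_pos : 0 < N⁻¹ := inv_pos.mpr hNpos
  refine ⟨N⁻¹ • τ, N⁻¹ • η, N⁻¹ • v, ?_, ?_⟩
  · -- unit norm
    have e1 : ‖N⁻¹ • τ‖ = N⁻¹ * ‖τ‖ := by
      rw [norm_smul, Real.norm_eq_abs, abs_of_pos hNinv_pos]
    have e2 : ‖dm (N⁻¹ • τ)‖ = N⁻¹ * ‖dm τ‖ := by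
      rw [map_smul, norm_smul, Real.norm_eq_abs, abs_of_pos hNinv_pos]
    have e3 : ‖N⁻¹ • η‖ = N⁻¹ * ‖η‖ := by
      rw [norm_smul, Real.norm_eq_abs, abs_of_pos hNinv_pos]
    have e4 : ‖N⁻¹ • v‖ = N⁻¹ * ‖v‖ := by
      rw [norm_smul, Real.norm_eq_abs, abs_of_pos hNinv_pos]
    have e5 : ‖d (N⁻¹ • v)‖ = N⁻¹ * ‖d v‖ := by
      rw [map_smul, norm_smul, Real.norm_eq_abs, abs_of_pos hNinv_pos]
    rw [e1, e2, e3, e4, e5]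
    have heq : (N⁻¹*‖τ‖)^2 + (N⁻¹*‖dm τ‖)^2 + (N⁻¹*‖η‖)^2 + (N⁻¹*‖v‖)^2 + (N⁻¹*‖d v‖)^2
        = N⁻¹^2 * Nsq := by rw [hNsqdef]; ring
    rw [heq, ← hN2]
    field_simp
  · -- inf-sup value
    have hval : ⟪σ, N⁻¹ • τ⟫ + ⟪ξ, N⁻¹ • η⟫ + ⟪dm σ, N⁻¹ • v⟫ + ⟪ξ, d (N⁻¹ • v)⟫
        + ⟪dm (N⁻¹ • τ), u⟫ + ⟪N⁻¹ • η, d u⟫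
        = N⁻¹ * (⟪σ, τ⟫ + ⟪ξ, η⟫ + ⟪dm σ, v⟫ + ⟪ξ, d v⟫ + ⟪dm τ, u⟫ + ⟪η, d u⟫) := by
      rw [map_smul, map_smul]
      simp only [real_inner_smul_left, real_inner_smul_right]
      ring
    rw [ge_iff_le, hval]
    have h1 : (700*c^8)⁻¹ ≤ N⁻¹ := inv_anti₀ hNpos hNle
    have hS_pos : (0:ℝ) < (8*c^2)⁻¹ := by positivity
    have hmul : (700*c^8) * (8*c^2) = 5600*c^10 := by ring
    calc (5600*c^10)⁻¹ = (700*c^8)⁻¹ * (8*c^2)⁻¹ := by rw [← mul_inv, hmul]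
    _ ≤ N⁻¹ * (⟪σ, τ⟫ + ⟪ξ, η⟫ + ⟪dm σ, v⟫ + ⟪ξ, d v⟫ + ⟪dm τ, u⟫ + ⟪η, d u⟫) :=
      mul_le_mul h1 hSlb (le_of_lt hS_pos) (le_of_lt hNinv_pos)
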